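/- Let Q be a finite nonempty set of points in ℝ^d, and let c_Q and r_Q be the center and radius of the minimum enclosing ball of Q. Let (c_t)_{t≥1} be a sequence of points defined by choosing c_1 ∈ Q arbitrarily and, for each t ≥ 1, setting c_{t+1} = c_t + (1/(t+1))·(q_t − c_t), where q_t ∈ Q is a point of Q farthest from c_t (i.e., ‖q_t − c_t‖ = max_{q ∈ Q} ‖q − c_t‖). Then for every t ≥ 1, ‖c_Q − c_t‖ ≤ r_Q/√t. -/

import Mathlib

set_option maxHeartbeats 1000000


/-- `IsMEB P c r` says the closed ball of center `c` and radius `r` is the minimum enclosing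
ball of `P`: it contains `P`, and any ball containing `P` has radius at least `r`. -/
def IsMEB {d : ℕ} (P : Set (EuclideanSpace ℝ (Fin d)))
    (c : EuclideanSpace ℝ (Fin d)) (r : ℝ) : Prop :=
  (∀ p ∈ P, dist p c ≤ r) ∧
    ∀ (c' : EuclideanSpace ℝ (Fin d)) (r' : ℝ), (∀ p ∈ P, dist p c' ≤ r') → r ≤ r'

/-- Key property of the MEB center: for any point `x`, some point of `Q` is at squared distance
at least `rQ ^ 2 + dist x cQ ^ 2` from `x`. -/
lemma meb_far_aux {d : ℕ} (Q : Set (EuclideanSpace ℝ (Fin d))) (hfin : Q.Finite)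
    (hne : Q.Nonempty) (cQ : EuclideanSpace ℝ (Fin d)) (rQ : ℝ) (hmeb : IsMEB Q cQ rQ)
    (x : EuclideanSpace ℝ (Fin d)) :
    ∃ p ∈ Q, rQ ^ 2 + dist x cQ ^ 2 ≤ dist p x ^ 2 := by
  by_contra hcon
  push_neg at hcon
  set D : ℝ := dist x cQ with hD
  have hD0 : 0 ≤ D := dist_nonneg
  -- take the max of squared distances to x over the finite set Q
  have hFne : hfin.toFinset.Nonempty := by
    simpa [Set.Finite.toFinset] using hne
  set M : ℝ := hfin.toFinset.sup' hFne (fun p => dist p x ^ 2) with hM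
  have hMlt : M < rQ ^ 2 + D ^ 2 := by
    rw [hM, Finset.sup'_lt_iff]
    intro p hp
    exact hcon p (hfin.mem_toFinset.mp hp)
  have hMle : ∀ p ∈ Q, dist p x ^ 2 ≤ M := by
    intro p hp
    exact Finset.le_sup' (fun p => dist p x ^ 2) (hfin.mem_toFinset.mpr hp)
  set ε : ℝ := rQ ^ 2 + D ^ 2 - M with hε
  have hε0 : 0 < ε := by simp [hε]; linarith
  set s : ℝ := min 1 (ε / (2 * (D ^ 2 + 1))) with hs
  have hs0 : 0 < s := by
    apply lt_min one_pos
    positivity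
  have hs1 : s ≤ 1 := min_le_left _ _
  have hsD : s * D ^ 2 ≤ ε / 2 := by
    have h1 : s ≤ ε / (2 * (D ^ 2 + 1)) := min_le_right _ _
    have h2 : s * D ^ 2 ≤ (ε / (2 * (D ^ 2 + 1))) * D ^ 2 := by
      apply mul_le_mul_of_nonneg_right h1 (by positivity)
    have h3 : (ε / (2 * (D ^ 2 + 1))) * D ^ 2 ≤ ε / 2 := by
      rw [div_mul_eq_mul_div, div_le_div_iff₀ (by positivity) (by norm_num)]
      nlinarith
    linarith
  -- the shifted center
  set c' : EuclideanSpace ℝ (Fin d) := cQ + s • (x - cQ) with hc'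
  have key : ∀ p ∈ Q, dist p c' ^ 2 ≤ rQ ^ 2 - s * ε / 2 := by
    intro p hp
    have hexp : dist p c' ^ 2
        = dist p cQ ^ 2 - 2 * s * inner ℝ (p - cQ) (x - cQ) + s ^ 2 * D ^ 2 := by
      rw [dist_eq_norm, hc']
      have : p - (cQ + s • (x - cQ)) = (p - cQ) - s • (x - cQ) := by abel
      rw [this, @norm_sub_sq_real, inner_smul_right, norm_smul, dist_eq_norm, hD,
        dist_eq_norm]
      have : ‖x - cQ‖ = ‖x - cQ‖ := rfl
      simp [mul_pow, sq_abs]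
      ring
    have hinner : dist p cQ ^ 2 - rQ ^ 2 + ε ≤ 2 * inner ℝ (p - cQ) (x - cQ) := by
      have h1 : dist p x ^ 2 ≤ rQ ^ 2 + D ^ 2 - ε := by
        have := hMle p hp; simp [hε] at *; linarith
      have h2 : dist p x ^ 2
          = dist p cQ ^ 2 - 2 * inner ℝ (p - cQ) (x - cQ) + D ^ 2 := by
        rw [dist_eq_norm]
        have : p - x = (p - cQ) - (x - cQ) := by abel
        rw [this, @norm_sub_sq_real, dist_eq_norm, hD, dist_eq_norm]
      linarith
    have hpr : dist p cQ ^ 2 ≤ rQ ^ 2 := by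
      have h := hmeb.1 p hp
      nlinarith [dist_nonneg (x := p) (y := cQ)]
    have hsε : s * (dist p cQ ^ 2 - rQ ^ 2 + ε) ≤ s * (2 * inner ℝ (p - cQ) (x - cQ)) :=
      mul_le_mul_of_nonneg_left hinner hs0.le
    have hsD2 : s ^ 2 * D ^ 2 ≤ s * (ε / 2) := by
      calc s ^ 2 * D ^ 2 = s * (s * D ^ 2) := by ring
        _ ≤ s * (ε / 2) := mul_le_mul_of_nonneg_left hsD hs0.le
    nlinarith [mul_le_mul_of_nonneg_left hpr (by linarith : (0:ℝ) ≤ 1 - s)]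
  -- derive the contradiction with minimality
  obtain ⟨p₀, hp₀⟩ := hne
  have hnn : 0 ≤ rQ ^ 2 - s * ε / 2 := le_trans (by positivity) (key p₀ hp₀)
  have hrle : rQ ≤ Real.sqrt (rQ ^ 2 - s * ε / 2) := by
    apply hmeb.2 c'
    intro p hp
    rw [show dist p c' = Real.sqrt (dist p c' ^ 2) by
      rw [Real.sqrt_sq dist_nonneg]]
    exact Real.sqrt_le_sqrt (key p hp)
  have hrQ0 : 0 ≤ rQ := le_trans dist_nonneg (hmeb.1 p₀ hp₀)
  have : rQ ^ 2 ≤ rQ ^ 2 - s * ε / 2 := by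
    have := Real.sqrt_le_sqrt (Real.sq_sqrt hnn ▸ le_refl (rQ ^ 2 - s * ε / 2))
    nlinarith [Real.sq_sqrt hnn, Real.sqrt_nonneg (rQ ^ 2 - s * ε / 2)]
  nlinarith

/-- let `Q` be a finite nonempty set with MEB center `c_Q` and radius `r_Q`, and
let `(c_t)` be defined by `c₁ ∈ Q` and `c_{t+1} = c_t + (1/(t+1))·(q_t − c_t)` where `q_t ∈ Q`
is farthest from `c_t`. Then `‖c_Q − c_t‖ ≤ r_Q/√t` for every `t ≥ 1`. -/
theorem badoiu_clarkson_convergence {d : ℕ}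
    (Q : Set (EuclideanSpace ℝ (Fin d))) (hfin : Q.Finite) (hne : Q.Nonempty)
    (cQ : EuclideanSpace ℝ (Fin d)) (rQ : ℝ) (hmeb : IsMEB Q cQ rQ)
    (c q : ℕ → EuclideanSpace ℝ (Fin d))
    (hc1 : c 1 ∈ Q)
    (hqmem : ∀ t : ℕ, 1 ≤ t → q t ∈ Q)
    (hqfar : ∀ t : ℕ, 1 ≤ t → ∀ p ∈ Q, dist p (c t) ≤ dist (q t) (c t))
    (hrec : ∀ t : ℕ, 1 ≤ t → c (t + 1) = c t + (1 / ((t : ℝ) + 1)) • (q t - c t)) :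
    ∀ t : ℕ, 1 ≤ t → dist cQ (c t) ≤ rQ / Real.sqrt t := by
  obtain ⟨p₀, hp₀⟩ := hne
  have hrQ0 : 0 ≤ rQ := le_trans dist_nonneg (hmeb.1 p₀ hp₀)
  intro t ht
  induction t, ht using Nat.le_induction with
  | base =>
    simpa [Real.sqrt_one, dist_comm] using hmeb.1 (c 1) hc1
  | succ t ht ih =>
    set n : ℝ := (t : ℝ) with hn
    have hn1 : 1 ≤ n := by rw [hn]; exact_mod_cast ht
    -- squared version of the inductive hypothesis
    have ih2 : dist cQ (c t) ^ 2 ≤ rQ ^ 2 / n := by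
      have h := ih
      have h2 : dist cQ (c t) ^ 2 ≤ (rQ / Real.sqrt n) ^ 2 := by
        nlinarith [dist_nonneg (x := cQ) (y := c t)]
      calc dist cQ (c t) ^ 2 ≤ (rQ / Real.sqrt n) ^ 2 := h2
        _ = rQ ^ 2 / n := by
          rw [div_pow, Real.sq_sqrt (by linarith)]
    set u : EuclideanSpace ℝ (Fin d) := c t - cQ with hu
    set v : EuclideanSpace ℝ (Fin d) := q t - c t with hv
    have hU : ‖u‖ = dist cQ (c t) := by rw [hu, dist_comm, dist_eq_norm]
    -- ‖u + v‖ ≤ rQ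
    have huv : ‖u + v‖ ≤ rQ := by
      have : u + v = q t - cQ := by rw [hu, hv]; abel
      rw [this, ← dist_eq_norm]
      exact hmeb.1 (q t) (hqmem t ht)
    -- ‖v‖² ≥ rQ² + ‖u‖²
    have hV : rQ ^ 2 + ‖u‖ ^ 2 ≤ ‖v‖ ^ 2 := by
      obtain ⟨p, hp, hple⟩ :=
        meb_far_aux Q hfin ⟨p₀, hp₀⟩ cQ rQ hmeb (c t)
      have h1 : dist p (c t) ≤ ‖v‖ := by
        rw [hv, ← dist_eq_norm]
        exact hqfar t ht p hp
      have h2 : dist p (c t) ^ 2 ≤ ‖v‖ ^ 2 := by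
        nlinarith [dist_nonneg (x := p) (y := c t)]
      have h3 : dist (c t) cQ = ‖u‖ := by rw [hu, dist_eq_norm]
      rw [h3] at hple
      linarith
    -- the recurrence
    set a : ℝ := 1 / (n + 1) with ha
    have ha0 : 0 < a := by rw [ha]; positivity
    have ha1 : a ≤ 1 := by
      rw [ha, div_le_one (by linarith)]; linarith
    have hrec' : c (t + 1) - cQ = u + a • v := by
      rw [hrec t ht, hu, hv, ha]; abel
    have hdist : dist cQ (c (t + 1)) ^ 2
        = ‖u‖ ^ 2 + 2 * a * inner ℝ u v + a ^ 2 * ‖v‖ ^ 2 := by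
      rw [dist_comm, dist_eq_norm, hrec', @norm_add_sq_real, inner_smul_right, norm_smul]
      simp [mul_pow, sq_abs]
      ring
    have hinner : 2 * (inner ℝ u v : ℝ) = ‖u + v‖ ^ 2 - ‖u‖ ^ 2 - ‖v‖ ^ 2 := by
      rw [@norm_add_sq_real]; ring
    -- squared bound
    have hsq : dist cQ (c (t + 1)) ^ 2 ≤ rQ ^ 2 / (n + 1) := by
      have huv2 : ‖u + v‖ ^ 2 ≤ rQ ^ 2 := by
        nlinarith [norm_nonneg (u + v)]
      have han : a * (n + 1) = 1 := by
        rw [ha]; field_simp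
      -- dist² = ‖u‖²(1-a)² + a²rQ² modulo inequalities
      have step : dist cQ (c (t + 1)) ^ 2 ≤ ‖u‖ ^ 2 * (1 - a) ^ 2 + rQ ^ 2 * a ^ 2 := by
        rw [hdist]
        have e1 : a * (2 * (inner ℝ u v : ℝ)) ≤ a * (rQ ^ 2 - ‖u‖ ^ 2 - ‖v‖ ^ 2) := by
          apply mul_le_mul_of_nonneg_left _ ha0.le
          rw [hinner]; linarith
        have e2 : (a - a ^ 2) * (rQ ^ 2 + ‖u‖ ^ 2) ≤ (a - a ^ 2) * ‖v‖ ^ 2 := by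
          apply mul_le_mul_of_nonneg_left hV
          nlinarith [mul_nonneg ha0.le (by linarith : (0:ℝ) ≤ 1 - a)]
        linarith only [e1, e2]
      have e3 : ‖u‖ ^ 2 * (1 - a) ^ 2 ≤ rQ ^ 2 / n * (1 - a) ^ 2 := by
        apply mul_le_mul_of_nonneg_right _ (by positivity)
        rw [hU]; exact ih2
      have e4 : rQ ^ 2 / n * (1 - a) ^ 2 + rQ ^ 2 * a ^ 2 = rQ ^ 2 / (n + 1) := by
        rw [ha]
        field_simp
        ring
      linarith
    -- conclude
    have hcast : ((t + 1 : ℕ) : ℝ) = n + 1 := by push_cast [hn]; ring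
    rw [hcast]
    have hfin : dist cQ (c (t + 1)) ≤ Real.sqrt (rQ ^ 2 / (n + 1)) := by
      rw [show dist cQ (c (t+1)) = Real.sqrt (dist cQ (c (t+1)) ^ 2) by
        rw [Real.sqrt_sq dist_nonneg]]
      exact Real.sqrt_le_sqrt hsq
    calc dist cQ (c (t + 1)) ≤ Real.sqrt (rQ ^ 2 / (n + 1)) := hfin
      _ = rQ / Real.sqrt (n + 1) := by
        rw [Real.sqrt_div (by positivity : (0:ℝ) ≤ rQ ^ 2), Real.sqrt_sq hrQ0]
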